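/- Under the stated setup: (i) the last swap of φ' equals τ_r, i.e., τ'_s = τ_r; (ii) a_1 = q, i.e., agent q, who initially holds x_q, is the first agent to give away x_q; (iii) for each z ∈ {1,…,s}, agent a_z prefers x_{a_{z+1}} to x_q; and (iv) for each z ∈ {2,…,s}, the preference list of agent a_z is exactly x_{a_{z+1}} ≻ x_q ≻ x_{a_z}, where x_{a_z} is her initial object. -/

import Mathlib

/-- The setting of the swap-dynamics model with `N` agents `0, 1, ..., N-1` and
`N` objects, object `j` being the object initially held by agent `j`.
Each agent has a preference list (a duplicate-free list of objects, most preferred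
first), and the agents form a social network given by a simple graph. -/
structure SwapModel (N : ℕ) where
  /-- the preference list of each agent -/
  pref : Fin N → List (Fin N)
  nodup : ∀ i, (pref i).Nodup
  /-- the underlying social network -/
  G : SimpleGraph (Fin N)

namespace SwapModel

variable {N : ℕ}

/-- Agent `i` prefers object `u` to object `v`: both appear on her preference list
and `u` appears (strictly) earlier. -/
def Prefers (M : SwapModel N) (i u v : Fin N) : Prop :=
  ∃ k l : ℕ, k < l ∧ (M.pref i)[k]? = some u ∧ (M.pref i)[l]? = some v

/-- An assignment: a bijection mapping every agent to an object on her list. -/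
def IsAssignment (M : SwapModel N) (σ : Fin N → Fin N) : Prop :=
  Function.Bijective σ ∧ ∀ i, σ i ∈ M.pref i

/-- `(σ 0, σ 1, …, σ t)` is a sequence of swaps: each next assignment arises from
the previous one by performing a swap between two adjacent agents, each of whom
prefers the object of the other agent. -/
def IsSwapSeq (M : SwapModel N) (t : ℕ) (σ : ℕ → Fin N → Fin N) : Prop :=
  M.IsAssignment (σ 0) ∧
    ∀ k, k < t → ∃ i j : Fin N, M.G.Adj i j ∧
      M.Prefers i (σ k j) (σ k i) ∧ M.Prefers j (σ k i) (σ k j) ∧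
      σ (k + 1) = σ k ∘ Equiv.swap i j

end SwapModel

/-- A swap: agent `a1` gives object `o1` to agent `a2` and receives object `o2`;
this records the swap `τ = {{a1, o1}, {a2, o2}}`. -/
structure Swap (N : ℕ) where
  a1 : Fin N
  o1 : Fin N
  a2 : Fin N
  o2 : Fin N

namespace SwapModel

variable {N : ℕ}

/-- The assignment `σ` admits the swap `τ`. -/
def Admitted (M : SwapModel N) (σ : Fin N → Fin N) (τ : Swap N) : Prop :=
  σ τ.a1 = τ.o1 ∧ σ τ.a2 = τ.o2 ∧ M.G.Adj τ.a1 τ.a2 ∧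
    M.Prefers τ.a1 τ.o2 τ.o1 ∧ M.Prefers τ.a2 τ.o1 τ.o2

/-- The assignment obtained from `σ` by performing the swap `τ`. -/
def applySwap (σ : Fin N → Fin N) (τ : Swap N) : Fin N → Fin N :=
  σ ∘ Equiv.swap τ.a1 τ.a2

/-- The assignment obtained from `σ` by performing a sequence of swaps. -/
def applySeq (σ : Fin N → Fin N) : List (Swap N) → (Fin N → Fin N)
  | [] => σ
  | τ :: φ => applySeq (applySwap σ τ) φ

/-- `φ` is a valid swap sequence for the start assignment `σ`. -/
def ValidSeq (M : SwapModel N) (σ : Fin N → Fin N) : List (Swap N) → Prop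
  | [] => True
  | τ :: φ => M.Admitted σ τ ∧ M.ValidSeq (applySwap σ τ) φ

/-- Object `x` is reachable for agent `I` from the initial assignment `σ0`. -/
def Reachable (M : SwapModel N) (σ0 : Fin N → Fin N) (I x : Fin N) : Prop :=
  ∃ φ : List (Swap N), M.ValidSeq σ0 φ ∧ applySeq σ0 φ I = x

end SwapModel

/-- The agent that gives away object `q` in the swap `τ` (assuming `τ` involves `q`). -/
def giver {N : ℕ} (q : Fin N) (τ : Swap N) : Fin N :=
  if τ.o1 = q then τ.a1 else τ.a2

section Aux

/-- The agent that receives object `q` in the swap `τ` (assuming `τ` involves `q`). -/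
def recv {N : ℕ} (q : Fin N) (τ : Swap N) : Fin N :=
  if τ.o1 = q then τ.a2 else τ.a1

/-- The object that the giver of `q` receives in the swap `τ`. -/
def otherObj {N : ℕ} (q : Fin N) (τ : Swap N) : Fin N :=
  if τ.o1 = q then τ.o2 else τ.o1

namespace SwapModel

variable {N : ℕ}

def PrefersEq (M : SwapModel N) (i u v : Fin N) : Prop := u = v ∨ M.Prefers i u v

lemma prefers_lt_length (M : SwapModel N) {i u : Fin N} {k : ℕ}
    (h : (M.pref i)[k]? = some u) : k < (M.pref i).length :=
  (List.getElem?_eq_some_iff.mp h).1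

lemma prefers_trans (M : SwapModel N) {i u v w : Fin N}
    (h1 : M.Prefers i u v) (h2 : M.Prefers i v w) : M.Prefers i u w := by
  obtain ⟨k, l, hkl, hk, hl⟩ := h1
  obtain ⟨k', l', hkl', hk', hl'⟩ := h2
  have he : l = k' :=
    (List.getElem?_inj (M.prefers_lt_length hl) (M.nodup i)).mp (hl.trans hk'.symm)
  exact ⟨k, l', by omega, hk, hl'⟩

lemma prefers_irrefl (M : SwapModel N) {i u : Fin N} (h : M.Prefers i u u) : False := by
  obtain ⟨k, l, hkl, hk, hl⟩ := h
  have := (List.getElem?_inj (M.prefers_lt_length hk) (M.nodup i)).mp (hk.trans hl.symm)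
  omega

lemma prefersEq_trans (M : SwapModel N) {i u v w : Fin N}
    (h1 : M.PrefersEq i u v) (h2 : M.PrefersEq i v w) : M.PrefersEq i u w := by
  rcases h1 with rfl | h1
  · exact h2
  rcases h2 with rfl | h2
  · exact Or.inr h1
  · exact Or.inr (M.prefers_trans h1 h2)

lemma key1 (M : SwapModel N) {i w q y b : Fin N} (h3 : (M.pref i).length ≤ 3)
    (hwq : M.Prefers i w q) (hqy : M.Prefers i q y) (hyb : M.PrefersEq i y b) : y = b := by
  rcases hyb with rfl | hyb
  · rfl
  exfalso
  obtain ⟨k1, k2, h12, hk1, hk2⟩ := hwq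
  obtain ⟨k3, k4, h34, hk3, hk4⟩ := hqy
  obtain ⟨k5, k6, h56, hk5, hk6⟩ := hyb
  have he : k2 = k3 :=
    (List.getElem?_inj (M.prefers_lt_length hk2) (M.nodup i)).mp (hk2.trans hk3.symm)
  have he2 : k4 = k5 :=
    (List.getElem?_inj (M.prefers_lt_length hk4) (M.nodup i)).mp (hk4.trans hk5.symm)
  have h6 := M.prefers_lt_length hk6
  omega

lemma key2 (M : SwapModel N) {i w q y : Fin N} (h3 : (M.pref i).length ≤ 3)
    (hwq : M.Prefers i w q) (hqy : M.Prefers i q y) : M.pref i = [w, q, y] := by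
  obtain ⟨k1, k2, h12, hk1, hk2⟩ := hwq
  obtain ⟨k3, k4, h34, hk3, hk4⟩ := hqy
  have he : k2 = k3 :=
    (List.getElem?_inj (M.prefers_lt_length hk2) (M.nodup i)).mp (hk2.trans hk3.symm)
  have h4 := M.prefers_lt_length hk4
  have e1 : k1 = 0 := by omega
  have e2 : k2 = 1 := by omega
  have e4 : k4 = 2 := by omega
  have hlen : (M.pref i).length = 3 := by omega
  subst e1 e2 e4
  refine List.ext_getElem? fun n => ?_
  match n with
  | 0 => rw [hk1]; rfl
  | 1 => rw [hk2]; rfl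
  | 2 => rw [hk4]; rfl
  | (n+3) =>
    rw [List.getElem?_eq_none (by omega)]
    rfl

lemma admitted_step (M : SwapModel N) {σ : Fin N → Fin N} {τ : Swap N}
    (h : M.Admitted σ τ) (i : Fin N) : M.PrefersEq i (applySwap σ τ i) (σ i) := by
  obtain ⟨h1, h2, hadj, hp1, hp2⟩ := h
  by_cases e1 : i = τ.a1
  · subst e1; right
    simp only [applySwap, Function.comp_apply, Equiv.swap_apply_left]
    rw [h1, h2]; exact hp1
  by_cases e2 : i = τ.a2
  · subst e2; right
    simp only [applySwap, Function.comp_apply, Equiv.swap_apply_right]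
    rw [h1, h2]; exact hp2
  · left
    simp only [applySwap, Function.comp_apply, Equiv.swap_apply_of_ne_of_ne e1 e2]

lemma applySwap_bijective {σ : Fin N → Fin N} (h : Function.Bijective σ) (τ : Swap N) :
    Function.Bijective (applySwap σ τ) := h.comp (Equiv.swap τ.a1 τ.a2).bijective

lemma validSeq_append (M : SwapModel N) :
    ∀ (l1 l2 : List (Swap N)) (σ : Fin N → Fin N),
      M.ValidSeq σ (l1 ++ l2) → M.ValidSeq σ l1
  | [], _, _, _ => trivial
  | τ :: l1, l2, σ, ⟨hadm, hval⟩ => ⟨hadm, validSeq_append M l1 l2 _ hval⟩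

/-- In a swap involving `q`, the giver of `q` holds `q` and prefers the object the
receiver holds to `q`; the receiver prefers `q` to her own object. -/
lemma sides (M : SwapModel N) {σ : Fin N → Fin N} {τ : Swap N} {q : Fin N}
    (hadm : M.Admitted σ τ) (hinv : τ.o1 = q ∨ τ.o2 = q) :
    M.Prefers (giver q τ) (otherObj q τ) q ∧ M.Prefers (recv q τ) q (otherObj q τ) ∧
      σ (giver q τ) = q ∧ σ (recv q τ) = otherObj q τ := by
  obtain ⟨h1, h2, hadj, hp1, hp2⟩ := hadm
  by_cases ho : τ.o1 = q
  · simp only [giver, recv, otherObj, if_pos ho]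
    rw [ho] at h1 hp1 hp2
    exact ⟨hp1, hp2, h1, h2⟩
  · have ho2 : τ.o2 = q := hinv.resolve_left ho
    simp only [giver, recv, otherObj, if_neg ho]
    rw [ho2] at h2 hp1 hp2
    exact ⟨hp2, hp1, h2, h1⟩

lemma master (M : SwapModel N) (q : Fin N) :
    ∀ (ψ : List (Swap N)) (σ : Fin N → Fin N), M.ValidSeq σ ψ → Function.Bijective σ →
    (∀ z, (hz : z < (ψ.filter (fun τ => decide (τ.o1 = q ∨ τ.o2 = q))).length) →
      ∃ σ', Function.Bijective σ' ∧ (∀ i, M.PrefersEq i (σ' i) (σ i)) ∧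
        M.Admitted σ' ((ψ.filter (fun τ => decide (τ.o1 = q ∨ τ.o2 = q)))[z]'hz) ∧
        (z = 0 → ∀ i, σ i = q → σ' i = q)) ∧
    (∀ z, (hz : z + 1 < (ψ.filter (fun τ => decide (τ.o1 = q ∨ τ.o2 = q))).length) →
      giver q ((ψ.filter (fun τ => decide (τ.o1 = q ∨ τ.o2 = q)))[z+1]'hz) =
      recv q ((ψ.filter (fun τ => decide (τ.o1 = q ∨ τ.o2 = q)))[z]'(by omega))) := by
  intro ψ
  induction ψ with
  | nil => intro σ _ _; constructor <;> (intro z hz; simp at hz)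
  | cons τ ψ ih =>
    intro σ hval hbij
    obtain ⟨hadm, hval'⟩ := hval
    have hbij' := applySwap_bijective hbij τ
    have IH := ih (applySwap σ τ) hval' hbij'
    by_cases hP : τ.o1 = q ∨ τ.o2 = q
    · have hfil : (τ :: ψ).filter (fun τ => decide (τ.o1 = q ∨ τ.o2 = q)) =
          τ :: ψ.filter (fun τ => decide (τ.o1 = q ∨ τ.o2 = q)) :=
        List.filter_cons_of_pos (by simpa using hP)
      simp only [hfil]
      constructor
      · intro z hz
        match z with
        | 0 =>
          refine ⟨σ, hbij, fun i => Or.inl rfl, ?_, fun _ i h => h⟩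
          simpa using hadm
        | z + 1 =>
          obtain ⟨σ', b, ch, adm, _⟩ := IH.1 z (by simpa using hz)
          exact ⟨σ', b, fun i => M.prefersEq_trans (ch i) (M.admitted_step hadm i),
            by simpa using adm, by simp⟩
      · intro z hz
        match z with
        | 0 =>
          have hz' : 0 < (ψ.filter (fun τ => decide (τ.o1 = q ∨ τ.o2 = q))).length := by
            simpa using hz
          obtain ⟨σ₂, bij₂, _, adm₂, hold⟩ := IH.1 0 hz'
          have hq : applySwap σ τ (recv q τ) = q := by
            by_cases ho : τ.o1 = q
            · simp only [recv, if_pos ho, applySwap, Function.comp_apply,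
                Equiv.swap_apply_right]
              rw [hadm.1, ho]
            · have ho2 : τ.o2 = q := hP.resolve_left ho
              simp only [recv, if_neg ho, applySwap, Function.comp_apply,
                Equiv.swap_apply_left]
              rw [hadm.2.1, ho2]
          have hq2 : σ₂ (recv q τ) = q := hold rfl _ hq
          have hinv0 : ((ψ.filter (fun τ => decide (τ.o1 = q ∨ τ.o2 = q)))[0]'hz').o1 = q ∨
              ((ψ.filter (fun τ => decide (τ.o1 = q ∨ τ.o2 = q)))[0]'hz').o2 = q := by
            have hm := List.getElem_mem hz'
            simpa using (List.mem_filter.mp hm).2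
          have hg := (M.sides adm₂ hinv0).2.2.1
          have : giver q ((ψ.filter (fun τ => decide (τ.o1 = q ∨ τ.o2 = q)))[0]'hz')
              = recv q τ := bij₂.injective (by rw [hg, hq2])
          simpa using this
        | z + 1 =>
          have := IH.2 z (by simpa using hz)
          simpa using this
    · have hfil : (τ :: ψ).filter (fun τ => decide (τ.o1 = q ∨ τ.o2 = q)) =
          ψ.filter (fun τ => decide (τ.o1 = q ∨ τ.o2 = q)) :=
        List.filter_cons_of_neg (by simpa using hP)
      simp only [hfil]
      refine ⟨fun z hz => ?_, IH.2⟩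
      obtain ⟨σ', b, ch, adm, hold⟩ := IH.1 z hz
      refine ⟨σ', b, fun i => M.prefersEq_trans (ch i) (M.admitted_step hadm i), adm, ?_⟩
      intro hz0 i hi
      apply hold hz0
      have e1 : i ≠ τ.a1 := by
        rintro rfl
        exact hP (Or.inl (by rw [← hadm.1]; exact hi))
      have e2 : i ≠ τ.a2 := by
        rintro rfl
        exact hP (Or.inr (by rw [← hadm.2.1]; exact hi))
      simp only [applySwap, Function.comp_apply, Equiv.swap_apply_of_ne_of_ne e1 e2]
      exact hi

end SwapModel

end Aux

/-- Lemma 1 (i)-(iv).  Agents are `0, …, N` (agent `0` playing the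
role of "agent 1" and agent `Fin.last N` the role of "agent n"), every preference list
has length at most three, and the initial assignment is `σ0 = id` (agent `i` initially
holds object `i`).  Let `φ` be a valid swap sequence for `σ0` in which agent `0`
obtains object `Fin.last N` in the last swap, let `τr = φ[r]` be a swap
`{{0, p}, {k, q}}` of `φ`, let `φ'` be the subsequence of the prefix `φ[0..r]`
consisting of exactly those swaps involving object `q`, let `a z` (for `1 ≤ z ≤ s`,
where `s` is the length of `φ'`) be the agent giving away `q` in the `z`-th swap of
`φ'`, and let `a (s+1) = p`.  Then:
(i) the last swap of `φ'` is `τr`; (ii) `a 1 = q`; (iii) for `1 ≤ z ≤ s`, agent `a z`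
prefers object `a (z+1)` to object `q`; (iv) for `2 ≤ z ≤ s`, the preference list of
agent `a z` is exactly `a (z+1) ≻ q ≻ a z` (her initial object last). -/
theorem statement2 (N : ℕ) (M : SwapModel (N + 1))
    (hpref3 : ∀ i, (M.pref i).length ≤ 3)
    (φ : List (Swap (N + 1))) (hvalid : M.ValidSeq id φ)
    (hne : φ ≠ [])
    (hlast : ((φ.getLast hne).a1 = 0 ∧ (φ.getLast hne).o2 = Fin.last N) ∨
             ((φ.getLast hne).a2 = 0 ∧ (φ.getLast hne).o1 = Fin.last N))
    (p q : Fin (N + 1)) (r : ℕ) (hr : r < φ.length)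
    (hτr : ((φ[r]'hr).a1 = 0 ∧ (φ[r]'hr).o1 = p ∧ (φ[r]'hr).o2 = q) ∨
           ((φ[r]'hr).a2 = 0 ∧ (φ[r]'hr).o2 = p ∧ (φ[r]'hr).o1 = q))
    (φ' : List (Swap (N + 1)))
    (hφ' : φ' = (φ.take (r + 1)).filter (fun τ => decide (τ.o1 = q ∨ τ.o2 = q)))
    (a : ℕ → Fin (N + 1))
    (ha : ∀ (z : ℕ) (h1 : 1 ≤ z) (hz : z ≤ φ'.length),
      a z = giver q (φ'[z - 1]'(by omega)))
    (hap : a (φ'.length + 1) = p) :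
    (φ'.getLast? = some (φ[r]'hr)) ∧
    (a 1 = q) ∧
    (∀ z, 1 ≤ z → z ≤ φ'.length → M.Prefers (a z) (a (z + 1)) q) ∧
    (∀ z, 2 ≤ z → z ≤ φ'.length → M.pref (a z) = [a (z + 1), q, a z]) := by

  classical
  -- the last swap of the prefix involves `q`
  have hτrq : decide ((φ[r]'hr).o1 = q ∨ (φ[r]'hr).o2 = q) = true := by
    rcases hτr with ⟨_, _, h⟩ | ⟨_, _, h⟩ <;> simp [h]
  have htake : φ.take (r + 1) = φ.take r ++ [φ[r]'hr] := by
    rw [List.take_succ, List.getElem?_eq_getElem hr]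
    rfl
  have hφ'' : φ' = (φ.take r).filter (fun τ => decide (τ.o1 = q ∨ τ.o2 = q)) ++ [φ[r]'hr] := by
    rw [hφ', htake, List.filter_append]
    simp only [List.filter_cons, hτrq, if_pos, List.filter_nil]
  -- (i)
  have hi : φ'.getLast? = some (φ[r]'hr) := by
    rw [hφ'']; exact List.getLast?_concat
  have hs : 1 ≤ φ'.length := by
    rw [hφ'']; simp
  have hlastel : ∀ h : φ'.length - 1 < φ'.length, φ'[φ'.length - 1]'h = φ[r]'hr := by
    intro h
    have h2 := hi
    rw [List.getLast?_eq_getElem?, List.getElem?_eq_getElem h] at h2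
    exact Option.some_injective _ h2
  -- validity of the prefix and master lemma
  have hψval : M.ValidSeq id (φ.take (r + 1)) :=
    M.validSeq_append _ (φ.drop (r + 1)) id (by rw [List.take_append_drop]; exact hvalid)
  obtain ⟨m1, m2⟩ := M.master q (φ.take (r + 1)) id hψval Function.bijective_id
  rw [← hφ'] at m1
  simp only [← hφ'] at m2
  -- every element of φ' involves q
  have hinv : ∀ z (hz : z < φ'.length), (φ'[z]'hz).o1 = q ∨ (φ'[z]'hz).o2 = q := by
    intro z hz
    have hm : φ'[z]'hz ∈ (φ.take (r + 1)).filter (fun τ => decide (τ.o1 = q ∨ τ.o2 = q)) := by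
      rw [← hφ']; exact List.getElem_mem hz
    simpa using (List.mem_filter.mp hm).2
  -- (ii)
  have hii : a 1 = q := by
    obtain ⟨σ', bij', ch', adm', hold⟩ := m1 0 (by omega)
    have h0 : σ' q = q := hold rfl q rfl
    have hgq : σ' (giver q (φ'[0]'(by omega))) = q := (M.sides adm' (hinv 0 (by omega))).2.2.1
    have hgg : giver q (φ'[0]'(by omega)) = q := bij'.injective (by rw [hgq, h0])
    rw [ha 1 le_rfl hs]
    exact hgg
  -- the object received by the giver of q in the z-th swap of φ' is object a (z+2)
  have hOther : ∀ z (hz : z < φ'.length), otherObj q (φ'[z]'hz) = a (z + 2) := by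
    intro z hz
    by_cases hzs : z + 1 < φ'.length
    · -- a (z+2) = giver of next q-swap = receiver of this one; receiver's object is initial
      have hanext : a (z + 2) = giver q (φ'[z + 1]'hzs) := by
        have := ha (z + 2) (by omega) (by omega)
        simpa using this
      have hrecv : giver q (φ'[z + 1]'hzs) = recv q (φ'[z]'hz) := m2 z hzs
      obtain ⟨σ₁, bij₁, ch₁, adm₁, _⟩ := m1 z hz
      obtain ⟨σ₂, bij₂, ch₂, adm₂, _⟩ := m1 (z + 1) hzs
      have s1 := M.sides adm₁ (hinv z hz)
      have s2 := M.sides adm₂ (hinv (z + 1) hzs)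
      -- receiver B of the z-th q-swap
      set B := recv q (φ'[z]'hz) with hB
      set y := otherObj q (φ'[z]'hz) with hy
      have hqy : M.Prefers B q y := s1.2.1
      have hyB : M.PrefersEq B y B := by
        have := ch₁ B
        rw [s1.2.2.2] at this
        simpa using this
      have hwq : M.Prefers B (otherObj q (φ'[z + 1]'hzs)) q := by
        have := s2.1
        rwa [hrecv] at this
      have := M.key1 (hpref3 B) hwq hqy hyB
      exact hy.symm.trans (this.trans (hrecv.symm.trans hanext.symm))
    · -- last q-swap: it is τ_r itself
      have hz1 : z = φ'.length - 1 := by omega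
      have hel : φ'[z]'hz = φ[r]'hr := by
        subst hz1; exact hlastel hz
      have hz2 : z + 2 = φ'.length + 1 := by omega
      rw [hz2, hap, hel]
      obtain ⟨σ₁, bij₁, ch₁, adm₁, _⟩ := m1 z hz
      rw [hel] at adm₁
      rcases hτr with ⟨ha1, ho1, ho2⟩ | ⟨ha2, ho2, ho1⟩
      · have hpq : (φ[r]'hr).o1 ≠ q := by
          intro hcon
          exact M.prefers_irrefl (ho2 ▸ hcon ▸ adm₁.2.2.2.1)
        rw [otherObj, if_neg hpq, ho1]
      · rw [otherObj, if_pos ho1, ho2]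
  -- (iii)
  have hiii : ∀ z, 1 ≤ z → z ≤ φ'.length → M.Prefers (a z) (a (z + 1)) q := by
    intro z h1 hzs
    obtain ⟨z', rfl⟩ : ∃ z', z = z' + 1 := ⟨z - 1, by omega⟩
    have hz' : z' < φ'.length := by omega
    have haz : a (z' + 1) = giver q (φ'[z']'hz') := by
      have := ha (z' + 1) (by omega) (by omega)
      simpa using this
    obtain ⟨σ₁, bij₁, ch₁, adm₁, _⟩ := m1 z' hz'
    have s1 := M.sides adm₁ (hinv z' hz')
    have := s1.1
    rw [hOther z' hz'] at this
    rw [haz]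
    exact this
  refine ⟨hi, hii, hiii, ?_⟩
  -- (iv)
  intro z h2 hzs
  obtain ⟨z', rfl⟩ : ∃ z', z = z' + 2 := ⟨z - 2, by omega⟩
  have hz1 : z' + 1 < φ'.length := by omega
  have hz0 : z' < φ'.length := by omega
  have haz : a (z' + 2) = giver q (φ'[z' + 1]'hz1) := by
    have := ha (z' + 2) (by omega) (by omega)
    simpa using this
  have hrecv : giver q (φ'[z' + 1]'hz1) = recv q (φ'[z']'hz0) := m2 z' hz1
  obtain ⟨σ₁, bij₁, ch₁, adm₁, _⟩ := m1 z' hz0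
  obtain ⟨σ₂, bij₂, ch₂, adm₂, _⟩ := m1 (z' + 1) hz1
  have s1 := M.sides adm₁ (hinv z' hz0)
  have s2 := M.sides adm₂ (hinv (z' + 1) hz1)
  set A := a (z' + 2) with hA
  have hArecv : A = recv q (φ'[z']'hz0) := haz.trans hrecv
  set y := otherObj q (φ'[z']'hz0) with hy
  have hqy : M.Prefers A q y := by rw [hArecv]; exact s1.2.1
  have hyA : M.PrefersEq A y A := by
    have := ch₁ A
    rw [hArecv, s1.2.2.2, ← hArecv] at this
    simpa using this
  have hwq : M.Prefers A (a (z' + 3)) q := by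
    have h5 := s2.1
    rw [← haz, hOther (z' + 1) hz1] at h5
    have h6 : z' + 1 + 2 = z' + 3 := by omega
    rwa [h6] at h5
  have hyA' : y = A := M.key1 (hpref3 A) hwq hqy hyA
  have := M.key2 (hpref3 A) hwq hqy
  rw [hyA'] at this
  have h3 : z' + 2 + 1 = z' + 3 := by omega
  rw [h3]
  exact this
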